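/- Let g > 0, μ > 0, θ ∈ ℝ. The field A^a_0(x) = 0, A^a_i(x) = δ^a_i · μ g^{−1/2} · y(g^{1/2} μ x₀ + θ) for a, i ∈ {1,2,3} is an exact solution of the sourceless classical SU(2) Yang–Mills equations (the elliptic massive wave solving Yang–Mills theory in the infrared). -/

import Mathlib

open Real

/-- Partial derivative of `f : ℝ⁴ → ℝ` in the `μ`-th coordinate direction. -/
noncomputable def pd (i : Fin 4) (f : (Fin 4 → ℝ) → ℝ) (x : Fin 4 → ℝ) : ℝ :=
  deriv (fun t : ℝ => f (Function.update x i t)) (x i)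

/-- The Minkowski metric `η = diag(1, -1, -1, -1)` (diagonal entries). -/
noncomputable def eta (μ : Fin 4) : ℝ := if μ = 0 then 1 else -1

/-- The Levi-Civita symbol `ε^{abc}` on three indices (structure constants of SU(2)). -/
noncomputable def eps (a b c : Fin 3) : ℝ :=
  ((b.val : ℝ) - (a.val : ℝ)) * ((c.val : ℝ) - (a.val : ℝ)) * ((c.val : ℝ) - (b.val : ℝ)) / 2

/-- The sourceless classical SU(2) Yang–Mills equations in Minkowski space for a
field `A^a_ν : ℝ⁴ → ℝ` (color index `a : Fin 3`, Lorentz index `ν : Fin 4`):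
`∂^μ∂_μ A^a_ν - ∂_ν(∂^μ A^a_μ) + g ε^{abc} A^{bμ}(∂_μ A^c_ν - ∂_ν A^c_μ)
 + g ε^{abc} ∂^μ(A^b_μ A^c_ν) + g² ε^{abc} ε^{cde} A^{bμ} A^d_μ A^e_ν = 0`. -/
def IsYMSolution (g : ℝ) (A : Fin 3 → Fin 4 → (Fin 4 → ℝ) → ℝ) : Prop :=
  ∀ (a : Fin 3) (ν : Fin 4) (x : Fin 4 → ℝ),
    (∑ μ : Fin 4, eta μ * pd μ (pd μ (A a ν)) x)
      - pd ν (fun z => ∑ μ : Fin 4, eta μ * pd μ (A a μ) z) x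
      + g * ∑ b : Fin 3, ∑ c : Fin 3, ∑ μ : Fin 4,
          eps a b c * (eta μ * A b μ x) * (pd μ (A c ν) x - pd ν (A c μ) x)
      + g * ∑ b : Fin 3, ∑ c : Fin 3, ∑ μ : Fin 4,
          eps a b c * (eta μ * pd μ (fun z => A b μ z * A c ν z) x)
      + g ^ 2 * ∑ b : Fin 3, ∑ c : Fin 3, ∑ d : Fin 3, ∑ e : Fin 3, ∑ μ : Fin 4,
          eps a b c * eps c d e * (eta μ * A b μ x) * A d μ x * A e ν x
      = 0

/-- The elliptic massive wave solving Yang–Mills theory in the infrared: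
with `y` the unique maximal solution of `y'' = -2y³`, `y(0) = 0`, `y'(0) = 1`
(the Jacobi elliptic function `sn(·, i)`), the field `A^a_0 = 0`,
`A^a_i = δ^a_i μ g^{-1/2} y(g^{1/2} μ x₀ + θ)` is an exact solution of the
sourceless classical SU(2) Yang–Mills equations. -/
lemma pd_eq (i : Fin 4) (f : (Fin 4 → ℝ) → ℝ) (h : ℝ → ℝ) (x : Fin 4 → ℝ)
    (hf : ∀ t, f (Function.update x i t) = h t) : pd i f x = deriv h (x i) := by
  unfold pd; congr 1; funext t; exact hf t

lemma pd_const_on (i : Fin 4) (f : (Fin 4 → ℝ) → ℝ) (x : Fin 4 → ℝ)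
    (hf : ∀ t, f (Function.update x i t) = f x) : pd i f x = 0 := by
  rw [pd_eq i f (fun _ => f x) x hf, deriv_const]

set_option maxHeartbeats 1600000 in
set_option maxRecDepth 10000 in
theorem elliptic_wave_solves_yang_mills
    (y yd : ℝ → ℝ)
    (hy : ∀ u : ℝ, HasDerivAt y (yd u) u)
    (hyd : ∀ u : ℝ, HasDerivAt yd (-2 * y u ^ 3) u)
    (hy0 : y 0 = 0) (hyd0 : yd 0 = 1)
    (g μ θ : ℝ) (hg : 0 < g) (hμ : 0 < μ)
    (A : Fin 3 → Fin 4 → (Fin 4 → ℝ) → ℝ)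
    (hA : A = fun a ν x =>
      if ν.val = a.val + 1 then μ / Real.sqrt g * y (Real.sqrt g * μ * x 0 + θ) else 0) :
    IsYMSolution g A := by
  obtain ⟨r, hr, rfl⟩ : ∃ r : ℝ, 0 < r ∧ g = r ^ 2 :=
    ⟨Real.sqrt g, Real.sqrt_pos.mpr hg, (Real.sq_sqrt hg.le).symm⟩
  rw [Real.sqrt_sq hr.le] at hA
  have hr0 : r ≠ 0 := ne_of_gt hr
  intro a ν x
  -- pointwise value of A
  have hAx : ∀ (b : Fin 3) (μ' : Fin 4) (z : Fin 4 → ℝ),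
      A b μ' z = if μ'.val = b.val + 1 then μ / r * y (r * μ * z 0 + θ) else 0 := by
    intro b μ' z; rw [hA]
  have hAupd : ∀ (b : Fin 3) (μ' : Fin 4) (z : Fin 4 → ℝ) (i : Fin 4) (t : ℝ), i ≠ 0 →
      A b μ' (Function.update z i t) = A b μ' z := by
    intro b μ' z i t hi
    rw [hAx, hAx, Function.update_of_ne (Ne.symm hi)]
  have hA0 : ∀ (b : Fin 3) (z : Fin 4 → ℝ), A b 0 z = 0 := by
    intro b z; rw [hAx]; simp
  -- derivative builders
  have hG : ∀ t : ℝ, HasDerivAt (fun t => μ / r * y (r * μ * t + θ))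
      (μ ^ 2 * yd (r * μ * t + θ)) t := by
    intro t
    have h1 : HasDerivAt (fun t : ℝ => r * μ * t + θ) (r * μ) t := by
      simpa using ((hasDerivAt_id t).const_mul (r * μ)).add_const θ
    have h2 := ((hy (r * μ * t + θ)).comp t h1).const_mul (μ / r)
    refine h2.congr_deriv ?_
    field_simp
  have hG1 : ∀ t : ℝ, HasDerivAt (fun t => μ ^ 2 * yd (r * μ * t + θ))
      (-2 * r * μ ^ 3 * (y (r * μ * t + θ)) ^ 3) t := by
    intro t
    have h1 : HasDerivAt (fun t : ℝ => r * μ * t + θ) (r * μ) t := by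
      simpa using ((hasDerivAt_id t).const_mul (r * μ)).add_const θ
    have h2 := ((hyd (r * μ * t + θ)).comp t h1).const_mul (μ ^ 2)
    refine h2.congr_deriv ?_
    ring
  -- first partials of A
  have pdA : ∀ (i : Fin 4) (b : Fin 3) (ν' : Fin 4) (z : Fin 4 → ℝ),
      pd i (A b ν') z =
        if i = 0 ∧ ν'.val = b.val + 1 then μ ^ 2 * yd (r * μ * z 0 + θ) else 0 := by
    intro i b ν' z
    by_cases hi : i = 0
    · subst hi
      by_cases hb : ν'.val = b.val + 1
      · rw [pd_eq 0 (A b ν') (fun t => μ / r * y (r * μ * t + θ)) z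
          (by intro t; rw [hAx, if_pos hb, Function.update_self])]
        rw [if_pos ⟨rfl, hb⟩]
        exact (hG (z 0)).deriv
      · rw [pd_eq 0 (A b ν') (fun _ => (0 : ℝ)) z
          (by intro t; rw [hAx, if_neg hb]), deriv_const]
        exact (if_neg (fun hc => hb hc.2)).symm
    · rw [pd_const_on i _ z (fun t => hAupd _ _ _ _ _ hi)]
      exact (if_neg (fun hc => hi hc.1)).symm
  have pdA_fun : ∀ (i : Fin 4) (b : Fin 3) (ν' : Fin 4),
      pd i (A b ν') =
        fun z => if i = 0 ∧ ν'.val = b.val + 1 then μ ^ 2 * yd (r * μ * z 0 + θ) else 0 :=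
    fun i b ν' => funext fun z => pdA i b ν' z
  -- second partials
  have pdpdA : ∀ (i : Fin 4) (b : Fin 3) (ν' : Fin 4) (z : Fin 4 → ℝ),
      pd i (pd i (A b ν')) z =
        if i = 0 ∧ ν'.val = b.val + 1 then -2 * r * μ ^ 3 * (y (r * μ * z 0 + θ)) ^ 3
        else 0 := by
    intro i b ν' z
    rw [pdA_fun]
    by_cases h : i = 0 ∧ ν'.val = b.val + 1
    · obtain ⟨hi, hb⟩ := h
      subst hi
      rw [if_pos ⟨rfl, hb⟩]
      rw [pd_eq 0 _ (fun t => μ ^ 2 * yd (r * μ * t + θ)) z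
        (by intro t; rw [if_pos ⟨rfl, hb⟩, Function.update_self])]
      exact (hG1 (z 0)).deriv
    · rw [if_neg h]
      exact pd_const_on i _ z (fun t => by simp only [if_neg h])
  -- partials of products
  have pdAA : ∀ (i : Fin 4) (b c : Fin 3) (ν' : Fin 4) (z : Fin 4 → ℝ),
      pd i (fun w => A b i w * A c ν' w) z = 0 := by
    intro i b c ν' z
    by_cases hi : i = 0
    · subst hi
      have hzero : (fun w => A b 0 w * A c ν' w) = fun _ => (0 : ℝ) :=
        funext fun w => by rw [hA0]; ring
      rw [hzero]
      exact pd_const_on _ _ _ (fun t => rfl)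
    · exact pd_const_on _ _ _
        (fun t => by rw [hAupd _ _ _ _ _ hi, hAupd _ _ _ _ _ hi])
  -- the divergence term vanishes identically
  have hdiv : (fun z => ∑ μ' : Fin 4, eta μ' * pd μ' (A a μ') z) = fun _ => (0 : ℝ) := by
    funext z
    have h0 : ∀ μ' : Fin 4, pd μ' (A a μ') z = 0 := by
      intro μ'
      rw [pdA]
      apply if_neg
      rintro ⟨h1, h2⟩
      rw [h1] at h2
      simp at h2
    simp [h0]
  have T2 : pd ν (fun z => ∑ μ' : Fin 4, eta μ' * pd μ' (A a μ') z) x = 0 := by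
    rw [hdiv]
    exact pd_const_on _ _ _ (fun t => rfl)
  rw [T2]
  simp only [pdAA]
  simp only [pdpdA, pdA, hAx]
  set Y := y (r * μ * x 0 + θ) with hY
  set Yd := yd (r * μ * x 0 + θ) with hYd
  fin_cases a <;> fin_cases ν <;>
    norm_num [Fin.sum_univ_four, Fin.sum_univ_three, eta, eps, Fin.ext_iff, -Fin.val_eq_zero_iff,
      show ((3:Fin 4):ℕ) = 3 from rfl, show ((2:Fin 4):ℕ) = 2 from rfl,
      show ((1:Fin 4):ℕ) = 1 from rfl, show ((0:Fin 4):ℕ) = 0 from rfl,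
      show ((2:Fin 3):ℕ) = 2 from rfl, show ((1:Fin 3):ℕ) = 1 from rfl,
      show ((0:Fin 3):ℕ) = 0 from rfl] <;>
    field_simp <;> ring
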